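/- arXiv:2501.07239 — 10 statements merged into one kernel-verified Lean document; each statement's English description precedes it below -/
import Mathlib

section
/- For every pair of positive integers a, b with a ≥ b, there exists a unique sequence (U_k) of positive integers with U_0 ≥ U_1 and U_{k+2} = U_{k+1} + U_k for all k, such that U_μ = b and U_{μ+1} = a for some index μ ≥ 0. -/
/-- An MP-sequence: a sequence of positive integers with `U 1 ≤ U 0` and the
Fibonacci-style recurrence. -/
def IsMPSeq (U : ℕ → ℕ) : Prop :=
  (∀ k, 0 < U k) ∧ U 1 ≤ U 0 ∧ ∀ k, U (k + 2) = U (k + 1) + U k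

private def mpAux (x y : ℕ) : ℕ → ℕ × ℕ
  | 0 => (x, y)
  | n + 1 => ((mpAux x y n).2, (mpAux x y n).1 + (mpAux x y n).2)

private def mpSeq (x y : ℕ) (n : ℕ) : ℕ := (mpAux x y n).1

private lemma mpSeq_zero (x y : ℕ) : mpSeq x y 0 = x := rfl

private lemma mpSeq_one (x y : ℕ) : mpSeq x y 1 = y := rfl

private lemma mpSeq_rec (x y n : ℕ) :
    mpSeq x y (n + 2) = mpSeq x y (n + 1) + mpSeq x y n := by
  simp [mpSeq, mpAux, Nat.add_comm]

private lemma mpAux_pos (x y : ℕ) (hx : 0 < x) (hy : 0 < y) (n : ℕ) :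
    0 < (mpAux x y n).1 ∧ 0 < (mpAux x y n).2 := by
  induction n with
  | zero => exact ⟨hx, hy⟩
  | succ n ih => exact ⟨ih.2, Nat.add_pos_left ih.1 _⟩

private lemma mpSeq_isMP (x y : ℕ) (hx : 0 < x) (hy : 0 < y) (hyx : y ≤ x) :
    IsMPSeq (mpSeq x y) :=
  ⟨fun n => (mpAux_pos x y hx hy n).1, hyx, fun n => mpSeq_rec x y n⟩

private lemma mp_ext {U V : ℕ → ℕ} (hU : IsMPSeq U) (hV : IsMPSeq V)
    (h0 : U 0 = V 0) (h1 : U 1 = V 1) : U = V := by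
  have key : ∀ n, U n = V n ∧ U (n + 1) = V (n + 1) := by
    intro n
    induction n with
    | zero => exact ⟨h0, h1⟩
    | succ n ih =>
      refine ⟨ih.2, ?_⟩
      rw [hU.2.2, hV.2.2, ih.1, ih.2]
  exact funext fun n => (key n).1

/-- For `k ≥ 1`, an MP-sequence is strictly increasing at `k`. -/
private lemma mp_strict {U : ℕ → ℕ} (hU : IsMPSeq U) (k : ℕ) :
    U (k + 1) < U (k + 2) := by
  rw [hU.2.2]
  exact Nat.lt_add_of_pos_right (hU.1 k)

private lemma aux : ∀ a : ℕ, ∀ b : ℕ, 0 < b → b ≤ a →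
    ∃! U : ℕ → ℕ, IsMPSeq U ∧ ∃ μ : ℕ, U μ = b ∧ U (μ + 1) = a := by
  intro a
  induction a using Nat.strong_induction_on with
  | _ a IH =>
    intro b hb hab
    rcases eq_or_lt_of_le hab with heq | hlt
    · -- a = b, forced μ = 0
      subst heq
      refine ⟨mpSeq b b, ⟨mpSeq_isMP b b hb hb le_rfl, 0, rfl, rfl⟩, ?_⟩
      rintro V ⟨hV, μ, hμ1, hμ2⟩
      have hμ0 : μ = 0 := by
        rcases μ with _ | k
        · rfl
        · exfalso
          have h1 := mp_strict hV k
          have h2 : V (k + 2) = b := hμ2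
          omega
      subst hμ0
      exact mp_ext hV (mpSeq_isMP b b hb hb le_rfl) hμ1 hμ2
    · rcases le_or_gt (2 * b) a with h2 | h2
      · -- b < a, 2b ≤ a : forced μ = 1
        have hab' : 0 < a - b := by omega
        have hba' : b ≤ a - b := by omega
        have hMP := mpSeq_isMP (a - b) b hab' hb hba'
        refine ⟨mpSeq (a - b) b, ⟨hMP, 1, rfl, ?_⟩, ?_⟩
        · rw [mpSeq_rec, mpSeq_one, mpSeq_zero]; omega
        · rintro V ⟨hV, μ, hμ1, hμ2⟩
          rcases μ with _ | k
          · exfalso; have h1 := hV.2.1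
            have h2 : V 0 = b := hμ1
            have h3 : V 1 = a := hμ2
            omega
          · have hμ1' : V (k + 1) = b := hμ1
            have hμ2' : V (k + 2) = a := hμ2
            have hk : V k = a - b := by
              have := hV.2.2 k; omega
            have hk0 : k = 0 := by
              rcases k with _ | j
              · rfl
              · exfalso
                have h1 : V (j + 2) = b := hμ1
                have h2 := hV.1 j
                have h3 := hV.2.2 j
                omega
            subst hk0
            exact mp_ext hV hMP (by rw [hk]; rfl) (by rw [hμ1]; rfl)
      · -- b < a < 2b : recurse with (a - b, b)
        have hab' : 0 < a - b := by omega
        have hba' : a - b ≤ b := by omega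
        obtain ⟨W, ⟨hW, μ', hW1, hW2⟩, hWu⟩ := IH b hlt (a - b) hab' hba'
        refine ⟨W, ⟨hW, μ' + 1, hW2, ?_⟩, ?_⟩
        · rw [hW.2.2, hW1, hW2]; omega
        · rintro V ⟨hV, μ, hμ1, hμ2⟩
          rcases μ with _ | k
          · exfalso; have h1 := hV.2.1
            have h2 : V 0 = b := hμ1
            have h3 : V 1 = a := hμ2
            omega
          · have hμ1' : V (k + 1) = b := hμ1
            have hμ2' : V (k + 2) = a := hμ2
            have hk : V k = a - b := by
              have := hV.2.2 k; omega
            exact hWu V ⟨hV, k, hk, hμ1'⟩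

theorem mp_seq_exists_unique (a b : ℕ) (hb : 0 < b) (hab : b ≤ a) :
    ∃! U : ℕ → ℕ, IsMPSeq U ∧ ∃ μ : ℕ, U μ = b ∧ U (μ + 1) = a := by
  exact aux a b hb hab
end

section
/- Let (U_k) be an MP-sequence and let k ≥ 1 and i satisfy 0 ≤ 2i ≤ k−1. Then U_{k−2i+1}/U_{k−2i} ≤ P_{2j+2}/P_{2j+1} if and only if U_{k+1}/U_k ≤ P_{2(j+i)+2}/P_{2(j+i)+1}. -/
lemma mp_step (U : ℕ → ℕ) (hrec : ∀ k, U (k + 2) = U (k + 1) + U k) (m j : ℕ) :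
    U (m + 1) * Nat.fib (2 * j + 1) ≤ U m * Nat.fib (2 * j + 2) ↔
      U (m + 3) * Nat.fib (2 * j + 3) ≤ U (m + 2) * Nat.fib (2 * j + 4) := by
  have e3 : U (m + 3) = 2 * U (m + 1) + U m := by
    rw [show m + 3 = m + 1 + 2 from rfl, hrec, hrec]; ring
  have e2 : U (m + 2) = U (m + 1) + U m := hrec m
  have f3 : Nat.fib (2 * j + 3) = Nat.fib (2 * j + 1) + Nat.fib (2 * j + 2) := by
    rw [show 2 * j + 3 = 2 * j + 1 + 2 from rfl, Nat.fib_add_two]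
  have f4 : Nat.fib (2 * j + 4) = Nat.fib (2 * j + 1) + 2 * Nat.fib (2 * j + 2) := by
    rw [show 2 * j + 4 = 2 * j + 2 + 2 from rfl, Nat.fib_add_two,
      show 2 * j + 2 + 1 = 2 * j + 3 from rfl, f3]; ring
  have h1 : U (m + 3) * Nat.fib (2 * j + 3) =
      U (m + 1) * Nat.fib (2 * j + 1) +
        (U (m + 1) * Nat.fib (2 * j + 1) + 2 * (U (m + 1) * Nat.fib (2 * j + 2)) +
          U m * Nat.fib (2 * j + 1) + U m * Nat.fib (2 * j + 2)) := by
    rw [e3, f3]; ring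
  have h2 : U (m + 2) * Nat.fib (2 * j + 4) =
      U m * Nat.fib (2 * j + 2) +
        (U (m + 1) * Nat.fib (2 * j + 1) + 2 * (U (m + 1) * Nat.fib (2 * j + 2)) +
          U m * Nat.fib (2 * j + 1) + U m * Nat.fib (2 * j + 2)) := by
    rw [e2, f4]; ring
  rw [h1, h2]
  exact Nat.add_le_add_iff_right.symm

lemma mp_iter (U : ℕ → ℕ) (hrec : ∀ k, U (k + 2) = U (k + 1) + U k) (m j i : ℕ) :
    U (m + 1) * Nat.fib (2 * j + 1) ≤ U m * Nat.fib (2 * j + 2) ↔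
      U (m + 2 * i + 1) * Nat.fib (2 * (j + i) + 1) ≤
        U (m + 2 * i) * Nat.fib (2 * (j + i) + 2) := by
  induction i with
  | zero => simp
  | succ n ih =>
      rw [ih, mp_step U hrec (m + 2 * n) (j + n)]
      have e1 : m + 2 * (n + 1) + 1 = m + 2 * n + 3 := by ring
      have e2 : m + 2 * (n + 1) = m + 2 * n + 2 := by ring
      have e3 : 2 * (j + (n + 1)) + 1 = 2 * (j + n) + 3 := by ring
      have e4 : 2 * (j + (n + 1)) + 2 = 2 * (j + n) + 4 := by ring
      rw [e1, e2, e3, e4]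

theorem mp_ratio_iff_even (U : ℕ → ℕ) (hU : IsMPSeq U) (k i j : ℕ)
    (hk : 1 ≤ k) (hi : 2 * i ≤ k - 1) :
    (U (k - 2 * i + 1) : ℝ) / (U (k - 2 * i) : ℝ) ≤
        (Nat.fib (2 * j + 2) : ℝ) / (Nat.fib (2 * j + 1) : ℝ) ↔
      (U (k + 1) : ℝ) / (U k : ℝ) ≤
        (Nat.fib (2 * (j + i) + 2) : ℝ) / (Nat.fib (2 * (j + i) + 1) : ℝ) := by
  obtain ⟨hpos, -, hrec⟩ := hU
  set m := k - 2 * i with hm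
  have hkm : k = m + 2 * i := by omega
  have hU1 : (0 : ℝ) < U m := by exact_mod_cast hpos m
  have hU2 : (0 : ℝ) < U k := by exact_mod_cast hpos k
  have hF1 : (0 : ℝ) < Nat.fib (2 * j + 1) := by
    exact_mod_cast Nat.fib_pos.mpr (by omega)
  have hF2 : (0 : ℝ) < Nat.fib (2 * (j + i) + 1) := by
    exact_mod_cast Nat.fib_pos.mpr (by omega)
  rw [div_le_div_iff₀ hU1 hF1, div_le_div_iff₀ hU2 hF2,
    mul_comm ((Nat.fib (2 * j + 2) : ℝ)), mul_comm ((Nat.fib (2 * (j + i) + 2) : ℝ)), hkm]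
  exact_mod_cast mp_iter U hrec m j i
end

section
/- Let a > b > 0 be integers with a/b < φ, and let (U_k) be the unique MP-sequence with U_μ = b and U_{μ+1} = a. Then μ = 2·min{k ≥ 0 : a/b ≤ P_{2k+2}/P_{2k+1}}. -/
noncomputable def goldenRatio' : ℝ := (1 + Real.sqrt 5) / 2

lemma phi_gt_one : 1 < goldenRatio' := by
  have h5 : (1:ℝ) < Real.sqrt 5 := by
    nlinarith [Real.sq_sqrt (by norm_num : (5:ℝ) ≥ 0), Real.sqrt_nonneg 5]
  unfold goldenRatio'; linarith

lemma phi_sq : goldenRatio' ^ 2 = goldenRatio' + 1 := by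
  have h5 : Real.sqrt 5 ^ 2 = 5 := Real.sq_sqrt (by norm_num)
  unfold goldenRatio'; nlinarith [h5]

lemma docagne (d : ℕ) : ∀ q : ℕ,
    (Nat.fib (q + d) : ℤ) * Nat.fib (q + 1) - Nat.fib (q + d + 1) * Nat.fib q
      = (-1) ^ q * Nat.fib d := by
  intro q
  induction q with
  | zero => simp
  | succ q ih =>
    have e1 : q + 1 + d = (q + d) + 1 := by omega
    rw [e1, show q + d + 1 + 1 = (q + d) + 2 from rfl,
      Nat.fib_add_two (n := q + d), show q + 1 + 1 = q + 2 from rfl,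
      Nat.fib_add_two (n := q)]
    push_cast
    ring_nf
    ring_nf at ih
    linarith [ih]

theorem mp_index_lt_phi (a b : ℕ) (hb : 0 < b) (hba : b < a)
    (hφ : (a : ℝ) / (b : ℝ) < goldenRatio')
    (U : ℕ → ℕ) (hU : IsMPSeq U) (μ : ℕ) (hμb : U μ = b) (hμa : U (μ + 1) = a) :
    μ = 2 * sInf {k : ℕ |
      (a : ℝ) / (b : ℝ) ≤ (Nat.fib (2 * k + 2) : ℝ) / (Nat.fib (2 * k + 1) : ℝ)} := by
  obtain ⟨hpos, hle, hrec⟩ := hU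
  have hb' : (0:ℝ) < (b:ℝ) := by exact_mod_cast hb
  have hφ1 := phi_gt_one
  have hφ2 := phi_sq
  -- closed form
  have hform : ∀ n, U (n + 1) = U 0 * Nat.fib n + U 1 * Nat.fib (n + 1) ∧
      U (n + 2) = U 0 * Nat.fib (n + 1) + U 1 * Nat.fib (n + 2) := by
    intro n
    induction n with
    | zero => refine ⟨by simp, ?_⟩; rw [hrec 0]; simp; omega
    | succ n ih =>
      refine ⟨ih.2, ?_⟩
      rw [show n + 1 + 2 = (n + 1) + 2 from rfl, hrec (n + 1), ih.1, ih.2,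
        Nat.fib_add_two (n := n + 1), Nat.fib_add_two (n := n)]
      ring
  -- gap formula : U(n+1) - φ U n = (1-φ)^n (U1 - φ U0)
  have hgap : ∀ n, (U (n + 1) : ℝ) - goldenRatio' * U n
      = (1 - goldenRatio') ^ n * ((U 1 : ℝ) - goldenRatio' * U 0) := by
    intro n
    induction n with
    | zero => simp
    | succ n ih =>
      rw [hrec n]
      push_cast
      rw [pow_succ]
      nlinarith [ih, hφ2]
  have hE : ((U 1 : ℝ) - goldenRatio' * U 0) < 0 := by
    have h0 : (1:ℝ) ≤ (U 0 : ℝ) := by exact_mod_cast hpos 0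
    have h1 : (U 1 : ℝ) ≤ (U 0 : ℝ) := by exact_mod_cast hle
    nlinarith
  have hab : (a : ℝ) < goldenRatio' * b := by
    have := (div_lt_iff₀ hb').mp hφ
    linarith
  -- μ is even
  have heven : Even μ := by
    rcases Nat.even_or_odd μ with h | h
    · exact h
    · exfalso
      have hg := hgap μ
      rw [hμa, hμb] at hg
      have hpow : (1 - goldenRatio') ^ μ < 0 := Odd.pow_neg h (by linarith)
      nlinarith
  -- μ ≠ 0
  have hμ0 : μ ≠ 0 := by
    intro h
    subst h
    rw [hμb] at hle; rw [hμa] at hle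
    omega
  obtain ⟨m, hm⟩ := heven
  have hm' : ∃ m', m = m' + 1 := by
    refine ⟨m - 1, ?_⟩; omega
  obtain ⟨m', rfl⟩ := hm'
  have hμ : μ = 2 * m' + 2 := by omega
  subst hμ
  -- expressions for a and b
  set x := U 0 with hx
  set y := U 1 with hy
  have hbe : b = x * Nat.fib (2 * m' + 1) + y * Nat.fib (2 * m' + 2) := by
    rw [← hμb]
    have := (hform (2 * m' + 1)).1
    rwa [show 2 * m' + 1 + 1 = 2 * m' + 2 from rfl] at this
  have hae : a = x * Nat.fib (2 * m' + 2) + y * Nat.fib (2 * m' + 3) := by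
    rw [← hμa]
    have := (hform (2 * m' + 2)).1
    rwa [show 2 * m' + 2 + 1 = 2 * m' + 3 from rfl] at this
  have hy1 : 1 ≤ y := hpos 1
  have hyx : y ≤ x := hle
  -- key inequality 1 : a * F(2m'+3) ≤ b * F(2m'+4)
  have key1 : a * Nat.fib (2 * m' + 3) ≤ b * Nat.fib (2 * m' + 4) := by
    have id1 := docagne 2 (2 * m' + 1)
    have id2 := docagne 1 (2 * m' + 2)
    rw [show 2 * m' + 1 + 2 = 2 * m' + 3 from rfl,
      show 2 * m' + 1 + 1 = 2 * m' + 2 from rfl,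
      show 2 * m' + 3 + 1 = 2 * m' + 4 from rfl] at id1
    rw [show 2 * m' + 2 + 1 = 2 * m' + 3 from rfl,
      show 2 * m' + 3 + 1 = 2 * m' + 4 from rfl] at id2
    have hodd : Odd (2 * m' + 1) := ⟨m', by ring⟩
    have heven2 : Even (2 * m' + 2) := ⟨m' + 1, by ring⟩
    rw [hodd.neg_one_pow] at id1
    rw [heven2.neg_one_pow] at id2
    simp only [Nat.fib_two, Nat.fib_one, Nat.cast_one] at id1 id2
    have hyx' : (y : ℤ) ≤ (x : ℤ) := by exact_mod_cast hyx
    have hid : (b : ℤ) * Nat.fib (2 * m' + 4) - (a : ℤ) * Nat.fib (2 * m' + 3)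
        = (x : ℤ) - (y : ℤ) := by
      rw [hae, hbe]
      push_cast
      linear_combination (-(x : ℤ)) * id1 - (y : ℤ) * id2
    have : (a : ℤ) * Nat.fib (2 * m' + 3) ≤ (b : ℤ) * Nat.fib (2 * m' + 4) := by
      linarith
    exact_mod_cast this
  -- key inequality 2 : for k ≤ m', b * F(2k+2) < a * F(2k+1)
  have key2 : ∀ k, k ≤ m' → b * Nat.fib (2 * k + 2) < a * Nat.fib (2 * k + 1) := by
    intro k hk
    have id1 := docagne (2 * (m' - k)) (2 * k + 1)
    have id2 := docagne (2 * (m' - k) + 1) (2 * k + 1)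
    have e1 : 2 * k + 1 + 2 * (m' - k) = 2 * m' + 1 := by omega
    have e2 : 2 * k + 1 + (2 * (m' - k) + 1) = 2 * m' + 2 := by omega
    rw [e1, show 2 * k + 1 + 1 = 2 * k + 2 from rfl,
      show 2 * m' + 1 + 1 = 2 * m' + 2 from rfl] at id1
    rw [e2, show 2 * k + 1 + 1 = 2 * k + 2 from rfl,
      show 2 * m' + 2 + 1 = 2 * m' + 3 from rfl] at id2
    have hodd : Odd (2 * k + 1) := ⟨k, by ring⟩
    rw [hodd.neg_one_pow] at id1 id2
    have hfd : 1 ≤ Nat.fib (2 * (m' - k) + 1) := Nat.fib_pos.mpr (by omega)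
    have hy1' : (1 : ℤ) ≤ (y : ℤ) := by exact_mod_cast hy1
    have hfd' : (1 : ℤ) ≤ (Nat.fib (2 * (m' - k) + 1) : ℤ) := by exact_mod_cast hfd
    have hx0 : (0 : ℤ) ≤ (x : ℤ) := by positivity
    have hf0 : (0 : ℤ) ≤ (Nat.fib (2 * (m' - k)) : ℤ) := by positivity
    have hid : (a : ℤ) * Nat.fib (2 * k + 1) - (b : ℤ) * Nat.fib (2 * k + 2)
        = (x : ℤ) * Nat.fib (2 * (m' - k)) + (y : ℤ) * Nat.fib (2 * (m' - k) + 1) := by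
      rw [hae, hbe]
      push_cast
      linear_combination (-(x : ℤ)) * id1 - (y : ℤ) * id2
    have h1 : (1 : ℤ) * 1 ≤ (y : ℤ) * Nat.fib (2 * (m' - k) + 1) :=
      mul_le_mul hy1' hfd' zero_le_one (by linarith)
    have h2 : (0 : ℤ) ≤ (x : ℤ) * Nat.fib (2 * (m' - k)) := mul_nonneg hx0 hf0
    have : (b : ℤ) * Nat.fib (2 * k + 2) < (a : ℤ) * Nat.fib (2 * k + 1) := by
      linarith
    exact_mod_cast this
  -- translate membership in the set
  set S := {k : ℕ |
      (a : ℝ) / (b : ℝ) ≤ (Nat.fib (2 * k + 2) : ℝ) / (Nat.fib (2 * k + 1) : ℝ)} with hS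
  have hmemiff : ∀ k, k ∈ S ↔ a * Nat.fib (2 * k + 1) ≤ b * Nat.fib (2 * k + 2) := by
    intro k
    have hf : (0:ℝ) < (Nat.fib (2 * k + 1) : ℝ) := by
      exact_mod_cast Nat.fib_pos.mpr (by omega)
    rw [hS, Set.mem_setOf_eq, div_le_div_iff₀ hb' hf,
      mul_comm ((Nat.fib (2 * k + 2) : ℝ)) (b : ℝ)]
    exact_mod_cast Iff.rfl
  have hmem : m' + 1 ∈ S := by
    rw [hmemiff]
    have : 2 * (m' + 1) + 1 = 2 * m' + 3 := by ring
    rw [this, show 2 * (m' + 1) + 2 = 2 * m' + 4 from by ring]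
    exact key1
  have hnot : ∀ k, k ≤ m' → k ∉ S := by
    intro k hk hkS
    rw [hmemiff] at hkS
    exact absurd hkS (by have := key2 k hk; omega)
  have hinf : sInf S = m' + 1 := by
    have h1 : sInf S ≤ m' + 1 := Nat.sInf_le hmem
    have h2 : sInf S ∈ S := Nat.sInf_mem ⟨m' + 1, hmem⟩
    rcases Nat.lt_or_ge (sInf S) (m' + 1) with h | h
    · exact absurd h2 (hnot _ (Nat.lt_succ_iff.mp h))
    · omega
  rw [hinf]
  omega
end

section
/- Let a > b > 0 be integers with a/b > φ, and let (U_k) be the unique MP-sequence with U_μ = b and U_{μ+1} = a. Then μ = 2·min{k ≥ 0 : a/b ≥ P_{2k+3}/P_{2k+2}} + 1. -/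
open goldenRatio Real

/-- d'Ocagne-style identity for Fibonacci numbers. -/
lemma fib_L (s r : ℕ) :
    (Nat.fib (s + r) : ℤ) * Nat.fib (s + 1) - Nat.fib (s + r + 1) * Nat.fib s
      = (-1) ^ s * Nat.fib r := by
  induction s with
  | zero => simp
  | succ s ih =>
    have h1 : s + 1 + r = s + r + 1 := by ring
    rw [h1, show s + r + 1 + 1 = s + r + 2 from rfl]
    have e1 : (Nat.fib (s + 1 + 1) : ℤ) = Nat.fib (s + 1) + Nat.fib s := by
      rw [show s + 1 + 1 = s + 2 from rfl, Nat.fib_add_two]; push_cast; ring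
    have e2 : (Nat.fib (s + r + 2) : ℤ) = Nat.fib (s + r + 1) + Nat.fib (s + r) := by
      rw [Nat.fib_add_two]; push_cast; ring
    rw [e1, e2]
    linear_combination (-1 : ℤ) * ih

lemma mp_formula (U : ℕ → ℕ) (hrec : ∀ k, U (k + 2) = U (k + 1) + U k) :
    ∀ k, U (k + 1) = U 0 * Nat.fib k + U 1 * Nat.fib (k + 1) := by
  intro k
  induction k using Nat.twoStepInduction with
  | zero => simp
  | one => rw [hrec 0]; simp [Nat.fib_one, Nat.fib_two]; omega
  | more k ih1 ih2 =>
    have f1 : Nat.fib (k + 2) = Nat.fib k + Nat.fib (k + 1) := Nat.fib_add_two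
    have f2 : Nat.fib (k + 2 + 1) = Nat.fib (k + 1) + Nat.fib (k + 1 + 1) := Nat.fib_add_two
    have f3 : Nat.fib (k + 1 + 1) = Nat.fib (k + 2) := rfl
    have h' : U (k + 2 + 1) = U (k + 1 + 1) + U (k + 1) := hrec (k + 1)
    rw [h', ih1, ih2, f2, f3, f1]
    ring

lemma fib_odd_lt_gold (k : ℕ) (hk : Odd k) :
    (Nat.fib (k + 1) : ℝ) < goldenRatio * Nat.fib k := by
  have h := fib_succ_sub_goldenRatio_mul_fib k
  have hneg : (goldenConj : ℝ) ^ k < 0 := Odd.pow_neg hk goldenConj_neg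
  linarith

theorem mp_index_gt_phi (a b : ℕ) (hb : 0 < b) (hba : b < a)
    (hφ : goldenRatio' < (a : ℝ) / (b : ℝ))
    (U : ℕ → ℕ) (hU : IsMPSeq U) (μ : ℕ) (hμb : U μ = b) (hμa : U (μ + 1) = a) :
    μ = 2 * sInf {k : ℕ |
      (Nat.fib (2 * k + 3) : ℝ) / (Nat.fib (2 * k + 2) : ℝ) ≤ (a : ℝ) / (b : ℝ)} + 1 := by
  obtain ⟨hpos, hq_le_p, hrec⟩ := hU
  set p := U 0 with hp
  set q := U 1 with hqdef
  have hq : 0 < q := hpos 1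
  have hform := mp_formula U hrec
  -- μ ≠ 0
  rcases Nat.eq_zero_or_pos μ with hμ0 | hμpos
  · subst hμ0
    rw [show (0 : ℕ) + 1 = 1 from rfl] at hμa
    omega
  obtain ⟨n, rfl⟩ : ∃ n, μ = n + 1 := ⟨μ - 1, by omega⟩
  have hb' : b = p * Nat.fib n + q * Nat.fib (n + 1) := by rw [← hμb, hform]
  have ha' : a = p * Nat.fib (n + 1) + q * Nat.fib (n + 2) := by rw [← hμa, hform]
  -- key integer identity
  have hL1 := fib_L n 2
  rw [show n + 2 + 1 = n + 3 from rfl] at hL1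
  have hL2 := fib_L (n + 1) 1
  rw [show n + 1 + 1 = n + 2 from rfl, show n + 1 + 1 + 1 = n + 3 from rfl] at hL2
  have hkey : (a : ℤ) * Nat.fib (n + 2) - b * Nat.fib (n + 3)
      = (-1) ^ n * ((p : ℤ) - q) := by
    rw [ha', hb']
    push_cast
    linear_combination (p : ℤ) * hL1 + (q : ℤ) * hL2
  -- conversion between real and nat inequalities
  have hfibpos : ∀ j : ℕ, (0 : ℝ) < Nat.fib (j + 1) := by
    intro j; exact_mod_cast Nat.fib_pos.mpr (Nat.succ_pos j)
  have hbR : (0 : ℝ) < b := by exact_mod_cast hb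
  have hconv : ∀ k : ℕ,
      ((Nat.fib (2 * k + 3) : ℝ) / (Nat.fib (2 * k + 2) : ℝ) ≤ (a : ℝ) / b)
        ↔ b * Nat.fib (2 * k + 3) ≤ a * Nat.fib (2 * k + 2) := by
    intro k
    rw [div_le_div_iff₀ (by exact hfibpos (2 * k + 1)) hbR, ← Nat.cast_mul, ← Nat.cast_mul,
      Nat.cast_le, mul_comm]
  -- n is even
  have hgold : goldenRatio' = goldenRatio := rfl
  rw [hgold] at hφ
  have hneven : Even n := by
    by_contra hodd
    have hodd' : Odd n := Nat.not_even_iff_odd.mp hodd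
    have hodd2 : Odd (n + 2) := by
      obtain ⟨j, hj⟩ := hodd'; exact ⟨j + 1, by omega⟩
    have h1 : (Nat.fib (n + 3) : ℝ) < goldenRatio * Nat.fib (n + 2) :=
      fib_odd_lt_gold (n + 2) hodd2
    have h2 : goldenRatio * (Nat.fib (n + 2) : ℝ) < (a / b) * Nat.fib (n + 2) := by
      apply mul_lt_mul_of_pos_right hφ (hfibpos (n + 1))
    have h3 : (b : ℝ) * Nat.fib (n + 3) < a * Nat.fib (n + 2) := by
      rw [mul_comm]
      calc (Nat.fib (n + 3) : ℝ) * b < (a / b) * Nat.fib (n + 2) * b := by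
            apply mul_lt_mul_of_pos_right (lt_trans h1 h2) hbR
        _ = a * Nat.fib (n + 2) := by field_simp
    have h4 : (b : ℤ) * Nat.fib (n + 3) < a * Nat.fib (n + 2) := by exact_mod_cast h3
    have hm1 : ((-1 : ℤ)) ^ n = -1 := Odd.neg_one_pow hodd'
    rw [hm1] at hkey
    have : (q : ℤ) ≤ p := by exact_mod_cast hq_le_p
    linarith
  obtain ⟨m, rfl⟩ : ∃ m, n = 2 * m := by
    obtain ⟨m, hm⟩ := hneven; exact ⟨m, by omega⟩
  have hm1 : ((-1 : ℤ)) ^ (2 * m) = 1 := by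
    rw [pow_mul]; norm_num
  rw [hm1, one_mul] at hkey
  -- m belongs to the set
  set S := {k : ℕ |
      (Nat.fib (2 * k + 3) : ℝ) / (Nat.fib (2 * k + 2) : ℝ) ≤ (a : ℝ) / (b : ℝ)} with hS
  have hmemS : m ∈ S := by
    rw [hS, Set.mem_setOf_eq, hconv m]
    have : (q : ℤ) ≤ p := by exact_mod_cast hq_le_p
    have : (b : ℤ) * Nat.fib (2 * m + 3) ≤ a * Nat.fib (2 * m + 2) := by linarith
    exact_mod_cast this
  -- no smaller element belongs to the set
  have hnotmem : ∀ i, i < m → i ∉ S := by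
    intro i hi
    rw [hS, Set.mem_setOf_eq, hconv i]
    rw [not_le]
    obtain ⟨d, hd⟩ : ∃ d, m = i + d + 1 := ⟨m - i - 1, by omega⟩
    have hA := fib_L (2 * i + 2) (2 * d)
    have hB := fib_L (2 * i + 2) (2 * d + 1)
    rw [show 2 * i + 2 + 2 * d + 1 = 2 * m + 1 from by omega,
        show 2 * i + 2 + 2 * d = 2 * m from by omega,
        show 2 * i + 2 + 1 = 2 * i + 3 from rfl,
        show ((-1 : ℤ)) ^ (2 * i + 2) = 1 from by rw [pow_add, pow_mul]; norm_num,
        one_mul] at hA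
    rw [show 2 * i + 2 + (2 * d + 1) + 1 = 2 * m + 2 from by omega,
        show 2 * i + 2 + (2 * d + 1) = 2 * m + 1 from by omega,
        show 2 * i + 2 + 1 = 2 * i + 3 from rfl,
        show ((-1 : ℤ)) ^ (2 * i + 2) = 1 from by rw [pow_add, pow_mul]; norm_num,
        one_mul] at hB
    have hdiff : (b : ℤ) * Nat.fib (2 * i + 3) - a * Nat.fib (2 * i + 2)
        = (p : ℤ) * Nat.fib (2 * d) + q * Nat.fib (2 * d + 1) := by
      rw [ha', hb']
      push_cast
      linear_combination (p : ℤ) * hA + (q : ℤ) * hB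
    have hfd : (1 : ℤ) ≤ Nat.fib (2 * d + 1) := by
      exact_mod_cast Nat.fib_pos.mpr (Nat.succ_pos (2 * d))
    have hqZ : (1 : ℤ) ≤ q := by exact_mod_cast hq
    have hpZ : (0 : ℤ) ≤ p := by positivity
    have : (0 : ℤ) < b * Nat.fib (2 * i + 3) - a * Nat.fib (2 * i + 2) := by
      rw [hdiff]
      have h5 : (0 : ℤ) ≤ (p : ℤ) * Nat.fib (2 * d) := by positivity
      have h6 : (1 : ℤ) ≤ (q : ℤ) * Nat.fib (2 * d + 1) := by
        calc (1 : ℤ) = 1 * 1 := by ring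
          _ ≤ (q : ℤ) * Nat.fib (2 * d + 1) := mul_le_mul hqZ hfd (by norm_num) (by linarith)
      linarith
    have : (a : ℤ) * Nat.fib (2 * i + 2) < b * Nat.fib (2 * i + 3) := by linarith
    exact_mod_cast this
  have h1 : sInf S ≤ m := Nat.sInf_le hmemS
  have h2 : m ≤ sInf S := by
    by_contra hlt
    push_neg at hlt
    exact hnotmem _ hlt (Nat.sInf_mem ⟨m, hmemS⟩)
  omega
end

section
/- Let (U_k) and (V_k) be MP-sequences and suppose there exist indices α, β with V_α = U_β and V_{α+1} = U_{β+1} + 1. Then for all 0 ≤ k ≤ min{α, β}, V_{α−k} = U_{β−k} + (−1)^{k+1} P_k. -/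
theorem mp_shift_one (U V : ℕ → ℕ) (hU : IsMPSeq U) (hV : IsMPSeq V)
    (α β : ℕ) (h1 : V α = U β) (h2 : (V (α + 1) : ℤ) = (U (β + 1) : ℤ) + 1) :
    ∀ k, k ≤ min α β →
      (V (α - k) : ℤ) = (U (β - k) : ℤ) + (-1) ^ (k + 1) * (Nat.fib k : ℤ) := by
  obtain ⟨hUpos, hU0, hUrec⟩ := hU
  obtain ⟨hVpos, hV0, hVrec⟩ := hV
  intro k
  induction k using Nat.strong_induction_on with
  | _ k ih =>
    match k with
    | 0 =>
      intro _
      simp [h1]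
    | 1 =>
      intro hk
      have hα : 1 ≤ α := le_trans hk (min_le_left _ _)
      have hβ : 1 ≤ β := le_trans hk (min_le_right _ _)
      have hV1 := hVrec (α - 1)
      have hU1 := hUrec (β - 1)
      rw [show α - 1 + 2 = α + 1 by omega, show α - 1 + 1 = α by omega] at hV1
      rw [show β - 1 + 2 = β + 1 by omega, show β - 1 + 1 = β by omega] at hU1
      have hV1' : (V (α + 1) : ℤ) = (V α : ℤ) + (V (α - 1) : ℤ) := by exact_mod_cast hV1
      have hU1' : (U (β + 1) : ℤ) = (U β : ℤ) + (U (β - 1) : ℤ) := by exact_mod_cast hU1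
      have h1' : (V α : ℤ) = (U β : ℤ) := by exact_mod_cast h1
      simp only [Nat.fib_one]
      push_cast
      linarith
    | k + 2 =>
      intro hk
      have hα : k + 2 ≤ α := le_trans hk (min_le_left _ _)
      have hβ : k + 2 ≤ β := le_trans hk (min_le_right _ _)
      have e1 := ih k (by omega) (by omega)
      have e2 := ih (k + 1) (by omega) (by omega)
      have hV1 := hVrec (α - (k + 2))
      have hU1 := hUrec (β - (k + 2))
      rw [show α - (k + 2) + 2 = α - k by omega,
          show α - (k + 2) + 1 = α - (k + 1) by omega] at hV1
      rw [show β - (k + 2) + 2 = β - k by omega,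
          show β - (k + 2) + 1 = β - (k + 1) by omega] at hU1
      have hV1' : (V (α - k) : ℤ) = (V (α - (k + 1)) : ℤ) + (V (α - (k + 2)) : ℤ) := by
        exact_mod_cast hV1
      have hU1' : (U (β - k) : ℤ) = (U (β - (k + 1)) : ℤ) + (U (β - (k + 2)) : ℤ) := by
        exact_mod_cast hU1
      have hfib : (Nat.fib (k + 2) : ℤ) = (Nat.fib (k + 1) : ℤ) + (Nat.fib k : ℤ) := by
        rw [Nat.fib_add_two]; push_cast; ring
      have hp1 : ((-1 : ℤ)) ^ (k + 2 + 1) = (-1) ^ (k + 1) := by ring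
      have hp2 : ((-1 : ℤ)) ^ (k + 1 + 1) = -(-1) ^ (k + 1) := by ring
      rw [hp1, hfib]
      rw [hp2] at e2
      linarith
end

section
/- Let (U_k) and (V_k) be MP-sequences and suppose there exist indices α, β with V_α = U_β + 1 and V_{α+1} = U_{β+1}. Then for all 0 ≤ k ≤ min{α, β}, V_{α−k} = U_{β−k} + (−1)^{k+2} P_{k+1}. -/
theorem mp_shift_one' (U V : ℕ → ℕ) (hU : IsMPSeq U) (hV : IsMPSeq V)
    (α β : ℕ) (h1 : (V α : ℤ) = (U β : ℤ) + 1) (h2 : V (α + 1) = U (β + 1)) :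
    ∀ k, k ≤ min α β →
      (V (α - k) : ℤ) = (U (β - k) : ℤ) + (-1) ^ (k + 2) * (Nat.fib (k + 1) : ℤ) := by
  obtain ⟨-, -, hUrec⟩ := hU
  obtain ⟨-, -, hVrec⟩ := hV
  intro k
  induction k using Nat.strong_induction_on with
  | _ k ih =>
    match k with
    | 0 => intro _; simpa using h1
    | 1 =>
      intro hk
      have hα : 1 ≤ α := le_trans hk (min_le_left _ _)
      have hβ : 1 ≤ β := le_trans hk (min_le_right _ _)
      obtain ⟨a, rfl⟩ : ∃ a, α = a + 1 := ⟨α - 1, (Nat.succ_pred_eq_of_pos hα).symm⟩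
      obtain ⟨b, rfl⟩ : ∃ b, β = b + 1 := ⟨β - 1, (Nat.succ_pred_eq_of_pos hβ).symm⟩
      have hV2 := hVrec a
      have hU2 := hUrec b
      simp only [Nat.add_sub_cancel]
      have hVa : (V (a + 2) : ℤ) = V (a + 1) + V a := by exact_mod_cast hV2
      have hUb : (U (b + 2) : ℤ) = U (b + 1) + U b := by exact_mod_cast hU2
      have h2' : (V (a + 2) : ℤ) = U (b + 2) := by exact_mod_cast h2
      have h1' : (V (a + 1) : ℤ) = U (b + 1) + 1 := h1
      norm_num
      linarith [hVa, hUb]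
    | (k + 2) =>
      intro hk
      have hα : k + 2 ≤ α := le_trans hk (min_le_left _ _)
      have hβ : k + 2 ≤ β := le_trans hk (min_le_right _ _)
      obtain ⟨a, rfl⟩ := Nat.le.dest hα
      obtain ⟨b, rfl⟩ := Nat.le.dest hβ
      have e1 := ih k (by omega) (by omega)
      have e2 := ih (k + 1) (by omega) (by omega)
      have s0 : k + 2 + a - k = a + 2 := by omega
      have s1 : k + 2 + a - (k + 1) = a + 1 := by omega
      have s2 : k + 2 + a - (k + 2) = a := by omega
      have t0 : k + 2 + b - k = b + 2 := by omega
      have t1 : k + 2 + b - (k + 1) = b + 1 := by omega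
      have t2 : k + 2 + b - (k + 2) = b := by omega
      rw [s0, t0] at e1
      rw [s1, t1] at e2
      rw [s2, t2]
      have hV2 : (V (a + 2) : ℤ) = V (a + 1) + V a := by exact_mod_cast hVrec a
      have hU2 : (U (b + 2) : ℤ) = U (b + 1) + U b := by exact_mod_cast hUrec b
      have hfib : (Nat.fib (k + 3) : ℤ) = Nat.fib (k + 2) + Nat.fib (k + 1) := by
        rw [Nat.fib_add_two]; push_cast; ring
      have hpow1 : ((-1 : ℤ)) ^ (k + 1 + 2) = -((-1) ^ (k + 2)) := by ring
      have hpow2 : ((-1 : ℤ)) ^ (k + 2 + 2) = (-1) ^ (k + 2) := by ring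
      rw [hpow1] at e2
      rw [hpow2, hfib]
      linarith [e1, e2, hV2, hU2]
end

section
/- Define R(n,a,b) for nonnegative integers by: R(n,0,0)=0; R(n,a,0)=n for a>0; R(n,0,b)=−n for b>0; and for a,b>0 with γ=min{a,b}, R(n,a,b) = L(n−γ, a−γ, b) where L(n,a,b) = −R(n,b,a) (this encodes the Little John Right-stop recursion: Right plays first on the Little John path). Then for integers a ≥ b > 0 and all n ≥ a+b with a/b < φ, R(n,a,b) = a + b − n − U_0, where (U_k) is the unique MP-sequence with U_μ = b, U_{μ+1} = a. -/
/-- The Right stop of the Little John game `(n; a, b)^*`, computed along the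
Little John path; the Left stop is `L n a b = -(ljR n b a)`. -/
def ljR : ℕ → ℕ → ℕ → ℤ
  | _, 0, 0 => 0
  | n, _+1, 0 => (n : ℤ)
  | n, 0, _+1 => -(n : ℤ)
  | n, a+1, b+1 =>
      -- γ = min (a+1) (b+1); R(n,a,b) = L(n-γ, a-γ, b) = -R(n-γ, b, a-γ)
      -(ljR (n - min (a + 1) (b + 1)) (b + 1) ((a + 1) - min (a + 1) (b + 1)))
  termination_by n a b => a + b
  decreasing_by omega

lemma ljR_pos_pos (n a b : ℕ) (ha : 0 < a) (hb : 0 < b) :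
    ljR n a b = -(ljR (n - min a b) b (a - min a b)) := by
  obtain ⟨a, rfl⟩ := Nat.exists_eq_succ_of_ne_zero ha.ne'
  obtain ⟨b, rfl⟩ := Nat.exists_eq_succ_of_ne_zero hb.ne'
  rw [ljR]

lemma ljR_pos_zero (n a : ℕ) (ha : 0 < a) : ljR n a 0 = (n : ℤ) := by
  obtain ⟨a, rfl⟩ := Nat.exists_eq_succ_of_ne_zero ha.ne'
  rw [ljR]

lemma ljR_key (U : ℕ → ℕ) (hU : IsMPSeq U) :
    ∀ μ n, U μ + U (μ + 1) ≤ n →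
      ljR n (U (μ + 1)) (U μ) = (-1) ^ μ * ((U (μ + 2) : ℤ) - U 0 - n) := by
  obtain ⟨hpos, h10, hrec⟩ := hU
  intro μ
  induction μ with
  | zero =>
    intro n hn
    rw [ljR_pos_pos n _ _ (hpos 1) (hpos 0), min_eq_left h10, Nat.sub_self,
      ljR_pos_zero _ _ (hpos 0)]
    have h2 := hrec 0
    have h1 : U 1 ≤ n := by omega
    push_cast [Nat.cast_sub h1, h2]
    ring
  | succ μ ih =>
    intro n hn
    have hn' : U (μ + 1) + U (μ + 2) ≤ n := hn
    have hstep : U (μ + 2) = U (μ + 1) + U μ := hrec μ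
    have hμpos := hpos μ
    have hble : U (μ + 1) ≤ U (μ + 2) := by omega
    rw [ljR_pos_pos n _ _ (by omega : 0 < U (μ + 2)) (hpos (μ + 1)),
      min_eq_right hble, show U (μ + 2) - U (μ + 1) = U μ by omega,
      ih (n - U (μ + 1)) (by omega)]
    show -((-1 : ℤ) ^ μ * ((U (μ + 2) : ℤ) - U 0 - ((n - U (μ + 1) : ℕ) : ℤ)))
      = (-1) ^ (μ + 1) * ((U (μ + 3) : ℤ) - U 0 - n)
    have h3 : U (μ + 3) = U (μ + 2) + U (μ + 1) := hrec (μ + 1)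
    have hcast : ((n - U (μ + 1) : ℕ) : ℤ) = (n : ℤ) - U (μ + 1) := by
      rw [Nat.cast_sub (by omega)]
    rw [hcast, h3]
    push_cast
    ring

lemma odd_ratio_gt (U : ℕ → ℕ) (hU : IsMPSeq U) :
    ∀ k, Real.goldenRatio * U (2 * k + 1) < U (2 * k + 2) := by
  obtain ⟨hpos, h10, hrec⟩ := hU
  intro k
  induction k with
  | zero =>
    have h2 : U 2 = U 1 + U 0 := hrec 0
    have h1 : (0:ℝ) < U 1 := by exact_mod_cast hpos 1
    have : Real.goldenRatio * U 1 < 2 * U 1 := by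
      exact mul_lt_mul_of_pos_right Real.goldenRatio_lt_two h1
    have h01 : (U 1 : ℝ) ≤ U 0 := by exact_mod_cast h10
    calc Real.goldenRatio * U 1 < 2 * U 1 := this
      _ ≤ (U 1 : ℝ) + U 0 := by linarith
      _ = U 2 := by rw [h2]; push_cast; ring
  | succ k ih =>
    -- from φ * U(2k+1) < U(2k+2), get U(2k+3) < φ * U(2k+2), then
    have hA : U (2 * k + 3) = U (2 * k + 2) + U (2 * k + 1) := hrec (2 * k + 1)
    have hB : U (2 * k + 4) = U (2 * k + 3) + U (2 * k + 2) := hrec (2 * k + 2)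
    have hgold : 1 < Real.goldenRatio := Real.one_lt_goldenRatio
    have hgpos : 0 < Real.goldenRatio := by linarith
    -- φ * U(2k+1) < U(2k+2)  ⟹  U(2k+1) < (φ - 1) * U(2k+2)? no:
    -- U(2k+1) < U(2k+2)/φ = (φ-1) U(2k+2)
    have hsq : Real.goldenRatio ^ 2 = Real.goldenRatio + 1 := Real.goldenRatio_sq
    have key : (U (2 * k + 1) : ℝ) < (Real.goldenRatio - 1) * U (2 * k + 2) := by
      have : Real.goldenRatio * U (2 * k + 1) < Real.goldenRatio * ((Real.goldenRatio - 1) * U (2 * k + 2)) := by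
        have : Real.goldenRatio * ((Real.goldenRatio - 1) * U (2 * k + 2)) = U (2 * k + 2) := by
          have : Real.goldenRatio * (Real.goldenRatio - 1) = 1 := by nlinarith [hsq]
          calc Real.goldenRatio * ((Real.goldenRatio - 1) * (U (2 * k + 2) : ℝ))
              = (Real.goldenRatio * (Real.goldenRatio - 1)) * U (2 * k + 2) := by ring
            _ = U (2 * k + 2) := by rw [this]; ring
        rw [this]; exact ih
      exact lt_of_mul_lt_mul_left this hgpos.le
    have goal1 : Real.goldenRatio * (U (2*k+2) + U (2*k+1) : ℝ) < (U (2*k+2) + U (2*k+1) : ℝ) + U (2*k+2) := by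
      nlinarith [hsq]
    show Real.goldenRatio * U (2 * k + 3) < U (2 * k + 4)
    rw [hA, hB, hA]
    push_cast
    convert goal1 using 2 <;> push_cast <;> ring

theorem ljR_of_ratio_lt_phi (a b : ℕ) (hb : 0 < b) (hba : b ≤ a)
    (hφ : (a : ℝ) / (b : ℝ) < goldenRatio')
    (U : ℕ → ℕ) (hU : IsMPSeq U) (μ : ℕ) (hμb : U μ = b) (hμa : U (μ + 1) = a) :
    ∀ n, a + b ≤ n → ljR n a b = (a : ℤ) + (b : ℤ) - (n : ℤ) - (U 0 : ℤ) := by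
  intro n hn
  have hbR : (0:ℝ) < b := by exact_mod_cast hb
  have hφ' : (a : ℝ) < Real.goldenRatio * b := by
    have : goldenRatio' = Real.goldenRatio := rfl
    rw [div_lt_iff₀ hbR] at hφ
    rw [this] at hφ; linarith
  -- μ is even
  have heven : Even μ := by
    by_contra hodd
    rw [Nat.not_even_iff_odd] at hodd
    obtain ⟨k, rfl⟩ := hodd
    have hgt : Real.goldenRatio * U (2 * k + 1) < U (2 * k + 2) := odd_ratio_gt U hU k
    have hμa' : U (2 * k + 2) = a := hμa
    rw [hμb, hμa'] at hgt
    linarith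
  have h2 : U (μ + 2) = U (μ + 1) + U μ := hU.2.2 μ
  have := ljR_key U hU μ n (by omega)
  rw [hμa, hμb] at this
  rw [this, heven.neg_one_pow, h2, hμa, hμb]
  push_cast
  ring
end

section
/- With R and L defined by the Little John Right-stop recursion as above, for integers a ≥ b > 0 and all n ≥ a+b with a/b > φ, R(n,a,b) = n − (a+b) + U_0, where (U_k) is the unique MP-sequence with U_μ = b, U_{μ+1} = a. -/
lemma ljR_seq (U : ℕ → ℕ) (hU : IsMPSeq U) :
    ∀ k n, U (k + 1) + U k ≤ n →
      ljR n (U (k + 1)) (U k) =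
        (-1 : ℤ) ^ (k + 1) * ((n : ℤ) - (U (k + 1) : ℤ) - (U k : ℤ) + (U 0 : ℤ)) := by
  obtain ⟨hpos, h10, hrec⟩ := hU
  intro k
  induction k with
  | zero =>
    intro n hn
    rw [ljR_pos_pos n (U 1) (U 0) (hpos 1) (hpos 0)]
    have hmin : min (U 1) (U 0) = U 1 := min_eq_left h10
    rw [hmin, Nat.sub_self, ljR_pos_zero _ _ (hpos 0)]
    have h1n : U 1 ≤ n := by omega
    push_cast [Nat.cast_sub h1n]
    ring
  | succ k ih =>
    intro n hn
    have hr := hrec k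
    have hp := hpos k
    have hn2 : U (k + 2) + U (k + 1) ≤ n := hn
    have hle : U (k + 1) ≤ U (k + 2) := by omega
    rw [ljR_pos_pos n (U (k + 2)) (U (k + 1)) (hpos _) (hpos _)]
    have hmin : min (U (k + 2)) (U (k + 1)) = U (k + 1) := min_eq_right hle
    have hsub : U (k + 2) - U (k + 1) = U k := by omega
    rw [hmin, hsub]
    have hn' : U (k + 1) + U k ≤ n - U (k + 1) := by omega
    rw [ih _ hn']
    have h1n : U (k + 1) ≤ n := by omega
    have hcast : ((n - U (k + 1) : ℕ) : ℤ) = (n : ℤ) - (U (k + 1) : ℤ) :=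
      Nat.cast_sub h1n
    have hrc : ((U (k + 2) : ℤ)) = (U (k + 1) : ℤ) + (U k : ℤ) := by
      exact_mod_cast congrArg (Nat.cast : ℕ → ℤ) (hrec k)
    rw [hcast, hrc]
    ring

theorem ljR_of_ratio_gt_phi (a b : ℕ) (hb : 0 < b) (hba : b ≤ a)
    (hφ : goldenRatio' < (a : ℝ) / (b : ℝ))
    (U : ℕ → ℕ) (hU : IsMPSeq U) (μ : ℕ) (hμb : U μ = b) (hμa : U (μ + 1) = a) :
    ∀ n, a + b ≤ n → ljR n a b = (n : ℤ) - ((a : ℤ) + (b : ℤ)) + (U 0 : ℤ) := by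
  obtain ⟨hpos, h10, hrec⟩ := hU
  -- Convert hφ to an integer inequality: b² + a*b < a²
  have hint : (b : ℤ) * b + (a : ℤ) * b < (a : ℤ) * a := by
    have hbR : (0 : ℝ) < (b : ℝ) := by exact_mod_cast hb
    have hab : goldenRatio' * (b : ℝ) < (a : ℝ) := by
      rwa [lt_div_iff₀ hbR] at hφ
    have hs : Real.sqrt 5 * Real.sqrt 5 = 5 :=
      Real.mul_self_sqrt (by norm_num)
    have hs0 : (0 : ℝ) ≤ Real.sqrt 5 := Real.sqrt_nonneg 5
    have hR : (b : ℝ) * b + (a : ℝ) * b < (a : ℝ) * a := by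
      have h2 : (1 + Real.sqrt 5) / 2 * (b : ℝ) < (a : ℝ) := by
        simpa [goldenRatio'] using hab
      nlinarith [mul_pos (sub_pos.2 h2) hbR, sq_nonneg ((a : ℝ) - (1 + Real.sqrt 5) / 2 * b)]
    exact_mod_cast hR
  -- invariant D k = U(k+1)² - U(k+1)·U k - (U k)²
  set D : ℕ → ℤ := fun k => (U (k + 1) : ℤ) ^ 2 - (U (k + 1) : ℤ) * (U k : ℤ) - (U k : ℤ) ^ 2
    with hD
  have hDalt : ∀ k, D k = (-1 : ℤ) ^ k * D 0 := by
    intro k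
    induction k with
    | zero => simp
    | succ k ih =>
      have hrc : ((U (k + 2) : ℤ)) = (U (k + 1) : ℤ) + (U k : ℤ) := by
        exact_mod_cast congrArg (Nat.cast : ℕ → ℤ) (hrec k)
      have : D (k + 1) = -D k := by
        simp only [hD, hrc]; ring
      rw [this, ih, pow_succ]; ring
  have hD0 : D 0 < 0 := by
    have h1 : 0 < U 0 := hpos 0
    have h2 : U 1 ≤ U 0 := h10
    have h1' : (0 : ℤ) < (U 0 : ℤ) := by exact_mod_cast h1
    have h2' : (U 1 : ℤ) ≤ (U 0 : ℤ) := by exact_mod_cast h2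
    have h3' : (0 : ℤ) < (U 1 : ℤ) := by exact_mod_cast hpos 1
    simp only [hD]
    nlinarith
  have hDμ : 0 < D μ := by
    simp only [hD, hμa, hμb]
    nlinarith
  have hodd : Odd μ := by
    rcases Nat.even_or_odd μ with he | ho
    · exfalso
      rw [hDalt μ, he.neg_one_pow, one_mul] at hDμ
      omega
    · exact ho
  have hpow : (-1 : ℤ) ^ (μ + 1) = 1 := by
    have : Even (μ + 1) := Odd.add_one hodd
    exact this.neg_one_pow
  intro n hn
  have := ljR_seq U ⟨hpos, h10, hrec⟩ μ n (by rw [hμa, hμb]; omega)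
  rw [hμa, hμb, hpow] at this
  rw [this]; ring
end

section
/- With R defined by the Little John Right-stop recursion, for integers b ≥ a > 0 and all n ≥ a+b, R(n,a,b) = −(n − a). -/
theorem ljR_of_le (a b : ℕ) (ha : 0 < a) (hab : a ≤ b) :
    ∀ n, a + b ≤ n → ljR n a b = -((n : ℤ) - (a : ℤ)) := by
  intro n hn
  obtain ⟨a', rfl⟩ : ∃ a', a = a' + 1 := ⟨a - 1, by omega⟩
  obtain ⟨b', rfl⟩ : ∃ b', b = b' + 1 := ⟨b - 1, by omega⟩
  rw [ljR]
  have hmin : min (a' + 1) (b' + 1) = a' + 1 := by omega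
  rw [hmin]
  have : a' + 1 - (a' + 1) = 0 := by omega
  rw [this, ljR]
  push_cast [show (a' : ℤ) + 1 ≤ n by exact_mod_cast by omega]
  omega
end

section
/- Little John stop monotonicity: with R defined by the Little John Right-stop recursion, for all nonnegative integers n, a, b with n ≥ a + b + 1, R(n,a,b) ≤ R(n,a+1,b) and R(n,a,b+1) ≤ R(n,a,b). -/
lemma ljR_00 (n : ℕ) : ljR n 0 0 = 0 := by rw [ljR]
lemma ljR_a0 (n a : ℕ) : ljR n (a+1) 0 = (n : ℤ) := by rw [ljR]
lemma ljR_0b (n b : ℕ) : ljR n 0 (b+1) = -(n : ℤ) := by rw [ljR]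
lemma ljR_rec (n a b : ℕ) : ljR n (a+1) (b+1) =
    -(ljR (n - min (a + 1) (b + 1)) (b + 1) ((a + 1) - min (a + 1) (b + 1))) := by rw [ljR]

theorem ljR_abs_le (n a b : ℕ) (h : a + b ≤ n) : |ljR n a b| ≤ (n : ℤ) := by
  match a, b with
  | 0, 0 => rw [ljR_00]; simp
  | a+1, 0 => rw [ljR_a0]; simp
  | 0, b+1 => rw [ljR_0b]; simp
  | a+1, b+1 =>
    rw [ljR_rec, abs_neg]
    exact (ljR_abs_le (n - min (a+1) (b+1)) (b+1) ((a+1) - min (a+1) (b+1)) (by omega)).trans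
      (by omega)
termination_by a + b
decreasing_by omega

theorem ljR_key_s18 (n a b : ℕ) :
    (a + b + 1 ≤ n → ljR n a b ≤ ljR n (a+1) b) ∧
    (a + b + 1 ≤ n → ljR n a (b+1) ≤ ljR n a b) ∧
    (1 ≤ b → a + b + 1 ≤ n → ljR n a b ≤ ljR (n-1) (a+1) (b-1)) := by
  refine ⟨?_, ?_, ?_⟩
  · -- A : monotone increasing in a
    intro hn
    match a, b with
    | 0, 0 => rw [ljR_00, ljR_a0]; positivity
    | a+1, 0 => rw [ljR_a0, ljR_a0]
    | 0, b+1 =>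
      rw [ljR_0b, ljR_rec]
      have h1 : min 1 (b+1) = 1 := by omega
      rw [h1]
      norm_num
      rcases b with _ | b
      · rw [ljR_a0]; omega
      · rw [ljR_a0]; omega
    | a+1, b+1 =>
      by_cases hab : a + 1 ≤ b
      · rw [ljR_rec, ljR_rec]
        have h1 : min (a+1) (b+1) = a+1 := by omega
        have h2 : min (a+1+1) (b+1) = a+2 := by omega
        rw [h1, h2]
        have e1 : a + 1 - (a+1) = 0 := by omega
        have e2 : a + 1 + 1 - (a+2) = 0 := by omega
        rw [e1, e2]
        rcases b with _ | b
        · omega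
        · rw [ljR_a0, ljR_a0]; omega
      · rw [ljR_rec, ljR_rec]
        have h1 : min (a+1) (b+1) = b+1 := by omega
        have h2 : min (a+1+1) (b+1) = b+1 := by omega
        rw [h1, h2]
        have e1 : a + 1 - (b+1) = a - b := by omega
        have e2 : a + 1 + 1 - (b+1) = (a - b) + 1 := by omega
        rw [e1, e2]
        exact neg_le_neg ((ljR_key_s18 (n - (b+1)) (b+1) (a-b)).2.1 (by omega))
  · -- B : monotone decreasing in b
    intro hn
    match a, b with
    | 0, 0 => rw [ljR_00, ljR_0b]; omega
    | 0, b+1 => rw [ljR_0b, ljR_0b]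
    | a+1, 0 =>
      rw [ljR_a0, ljR_rec]
      have h1 : min (a+1) 1 = 1 := by omega
      rw [h1]
      norm_num
      have hb := abs_le.mp (ljR_abs_le (n-1) 1 a (by omega))
      omega
    | a+1, b+1 =>
      by_cases hab : a ≤ b
      · rw [ljR_rec, ljR_rec]
        have h1 : min (a+1) (b+1+1) = a+1 := by omega
        have h2 : min (a+1) (b+1) = a+1 := by omega
        rw [h1, h2]
        have e1 : a + 1 - (a+1) = 0 := by omega
        rw [e1]
        rw [ljR_a0, ljR_a0]
      · rw [ljR_rec, ljR_rec]
        have h1 : min (a+1) (b+1+1) = b+2 := by omega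
        have h2 : min (a+1) (b+1) = b+1 := by omega
        rw [h1, h2]
        have e1 : a + 1 - (b+2) = a - b - 1 := by omega
        have e2 : a + 1 - (b+1) = a - b := by omega
        rw [e1, e2]
        have hQ := (ljR_key_s18 (n - (b+1)) (b+1) (a-b)).2.2 (by omega) (by omega)
        have e3 : n - (b+1) - 1 = n - (b+2) := by omega
        have e4 : b + 1 + 1 = b + 2 := by omega
        have e5 : a - b - 1 = (a - b) - 1 := rfl
        rw [e3, e4] at hQ
        exact neg_le_neg hQ
  · -- Q : diagonal step
    intro hb hn
    match a, b with
    | a, 0 => omega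
    | 0, 1 =>
      rw [ljR_0b]
      norm_num
      rw [ljR_a0]
      omega
    | a+1, 1 =>
      rw [ljR_rec]
      have h1 : min (a+1) 1 = 1 := by omega
      rw [h1]
      norm_num
      rw [ljR_a0]
      have hB := abs_le.mp (ljR_abs_le (n-1) 1 a (by omega))
      omega
    | 0, c+2 =>
      rw [ljR_0b]
      norm_num
      rw [ljR_rec]
      have h1 : min 1 (c+1) = 1 := by omega
      rw [h1]
      norm_num
      rcases c with _ | c
      · rw [ljR_a0]; omega
      · rw [ljR_a0]; omega
    | a+1, c+2 =>
      norm_num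
      rcases lt_trichotomy (a+1) (c+1) with hlt | heq | hgt
      · -- a+1 < c+1 : not tangled, both reduce to constants
        rw [ljR_rec, ljR_rec]
        have h1 : min (a+1) (c+1+1) = a+1 := by omega
        have h2 : min (a+1+1) (c+1) = a+2 := by omega
        rw [h1, h2]
        have e1 : a + 1 - (a+1) = 0 := by omega
        have e2 : a + 1 + 1 - (a+2) = 0 := by omega
        rw [e1, e2]
        rcases c with _ | c
        · omega
        · rw [ljR_a0]
          rcases c with _ | c
          · rw [ljR_a0]; omega
          · rw [ljR_a0]; omega
      · -- a+1 = c+1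
        rw [ljR_rec, ljR_rec]
        have h1 : min (a+1) (c+1+1) = a+1 := by omega
        have h2 : min (a+1+1) (c+1) = c+1 := by omega
        rw [h1, h2]
        have e1 : a + 1 - (a+1) = 0 := by omega
        have e2 : a + 1 + 1 - (c+1) = 1 := by omega
        rw [e1, e2]
        rw [ljR_a0]
        have hB := abs_le.mp (ljR_abs_le (n - 1 - (c+1)) (c+1) 1 (by omega))
        omega
      · -- a+1 > c+1, i.e. a ≥ c+1
        rw [ljR_rec, ljR_rec]
        have h1 : min (a+1) (c+1+1) = c+2 := by omega
        have h2 : min (a+1+1) (c+1) = c+1 := by omega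
        rw [h1, h2]
        have e1 : a + 1 - (c+2) = a - c - 1 := by omega
        have e2 : a + 1 + 1 - (c+1) = (a - c - 1) + 2 := by omega
        rw [e1, e2]
        have e3 : n - 1 - (c+1) = n - (c+2) := by omega
        rw [e3]
        -- need : ljR (n-(c+2)) (c+1) ((a-c-1)+2) ≤ ljR (n-(c+2)) (c+2) (a-c-1)
        refine neg_le_neg ?_
        have s1 := (ljR_key_s18 (n - (c+2)) (c+1) ((a-c-1)+1)).2.1 (by omega)
        have s2 := (ljR_key_s18 (n - (c+2)) (c+1) ((a-c-1)+1)).1 (by omega)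
        have s3 := (ljR_key_s18 (n - (c+2)) (c+2) (a-c-1)).2.1 (by omega)
        have e4 : (a - c - 1) + 1 + 1 = (a - c - 1) + 2 := by omega
        have e5 : c + 1 + 1 = c + 2 := by omega
        rw [e4] at s1
        rw [e5] at s2
        calc ljR (n - (c+2)) (c+1) ((a-c-1)+2) ≤ ljR (n - (c+2)) (c+1) ((a-c-1)+1) := s1
          _ ≤ ljR (n - (c+2)) (c+2) ((a-c-1)+1) := s2
          _ ≤ ljR (n - (c+2)) (c+2) (a-c-1) := s3
termination_by a + b
decreasing_by all_goals omega

theorem ljR_monotone (n a b : ℕ) (hn : a + b + 1 ≤ n) :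
    ljR n a b ≤ ljR n (a + 1) b ∧ ljR n a (b + 1) ≤ ljR n a b :=
  ⟨(ljR_key_s18 n a b).1 hn, (ljR_key_s18 n a b).2.1 hn⟩
end
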